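/- Derivative bound for induced matrix functions: with the entrywise formula above and the compatibility condition on Γ, each off-diagonal-type entry satisfies |Γ^q_{ij}(f(x_i)−f(x_j))/(x^q_i−x^q_j)| ≤ d n² max_{s, x∈E} |∂f/∂x^s(x)| · max_{i,j,r} |Γ^r_{ij}|, where E is a convex set containing all x_i. -/

import Mathlib

/-- Derivative bound: under the compatibility condition on `Γ` and with
`M` bounding all first partials of `f` on the convex set `E` containing the joint
eigenvalues, and `G` bounding all entries of the `Γ^r`, each off-diagonal-type entry
satisfies `|Γ^q_{ij}(f(x_i)−f(x_j))/(x^q_i−x^q_j)| ≤ d n² M G`. -/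
theorem stmt16 (d n : ℕ) (E : Set (Fin d → ℝ)) (hE : IsOpen E) (hEc : Convex ℝ E)
    (f : (Fin d → ℝ) → ℝ) (hf : ContDiffOn ℝ 1 f E)
    (M : ℝ) (hM : ∀ (s : Fin d), ∀ x ∈ E, |fderivWithin ℝ f E x (Pi.single s 1)| ≤ M)
    (x : Fin n → Fin d → ℝ) (hx : ∀ i, x i ∈ E)
    (Γ : Fin d → Matrix (Fin n) (Fin n) ℂ)
    (hcompat : ∀ (i j : Fin n) (r s : Fin d),
      Γ s i j * ((x i r : ℂ) - (x j r : ℂ)) = Γ r i j * ((x i s : ℂ) - (x j s : ℂ)))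
    (G : ℝ) (hG : ∀ (r : Fin d) (i j : Fin n), ‖Γ r i j‖ ≤ G)
    (i j : Fin n) (q : Fin d) (hq : x i q ≠ x j q) :
    ‖Γ q i j * ((f (x i) : ℂ) - (f (x j) : ℂ)) / ((x i q : ℂ) - (x j q : ℂ))‖ ≤
      d * n ^ 2 * M * G := by
  have hn : 0 < n := i.pos
  have hM0 : 0 ≤ M := le_trans (abs_nonneg _) (hM q (x i) (hx i))
  have hG0 : 0 ≤ G := le_trans (norm_nonneg _) (hG q i j)
  set v : Fin d → ℝ := x i - x j with hv
  set γ : ℝ → (Fin d → ℝ) := fun t => x j + t • v with hγ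
  have hγmem : ∀ t ∈ Set.Icc (0:ℝ) 1, γ t ∈ E := fun t ht =>
    hEc.add_smul_sub_mem (hx j) (hx i) ht
  have hγcont : Continuous γ := by
    fun_prop
  have hγderiv : ∀ t : ℝ, HasDerivAt γ v t := by
    intro t
    have h1 : HasDerivAt (fun t : ℝ => t • v) ((1:ℝ) • v) t :=
      (hasDerivAt_id t).smul_const v
    simpa [hγ] using h1.const_add (x j)
  have hfd : ∀ y ∈ E, HasFDerivAt f (fderiv ℝ f y) y := fun y hy =>
    ((hf.contDiffAt (hE.mem_nhds hy)).differentiableAt one_ne_zero).hasFDerivAt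
  have hDcont : ContinuousOn (fderiv ℝ f) E :=
    hf.continuousOn_fderiv_of_isOpen hE le_rfl
  -- continuity of t ↦ fderiv f (γ t) w on [0,1]
  have hφcont : ∀ w : Fin d → ℝ,
      ContinuousOn (fun t => fderiv ℝ f (γ t) w) (Set.Icc (0:ℝ) 1) := by
    intro w
    have h1 : ContinuousOn (fun t => fderiv ℝ f (γ t)) (Set.Icc (0:ℝ) 1) :=
      hDcont.comp hγcont.continuousOn hγmem
    exact (ContinuousLinearMap.apply ℝ ℝ w).continuous.comp_continuousOn h1
  have hφint : ∀ w : Fin d → ℝ,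
      IntervalIntegrable (fun t => fderiv ℝ f (γ t) w) MeasureTheory.volume 0 1 := by
    intro w
    exact ((hφcont w).mono (by rw [Set.uIcc_of_le (by norm_num)])).intervalIntegrable
  -- fundamental theorem
  have hftc : (∫ t in (0:ℝ)..1, fderiv ℝ f (γ t) v) = f (x i) - f (x j) := by
    have h := intervalIntegral.integral_eq_sub_of_hasDerivAt
      (f := fun t => f (γ t)) (f' := fun t => fderiv ℝ f (γ t) v)
      (a := 0) (b := 1) ?_ (hφint v)
    · have h0 : γ 0 = x j := by simp [hγ]
      have h1 : γ 1 = x i := by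
        funext k; simp [hγ, hv]
      rw [h]; rw [h0, h1]
    · intro t ht
      rw [Set.uIcc_of_le (by norm_num)] at ht
      exact (hfd (γ t) (hγmem t ht)).comp_hasDerivAt t (hγderiv t)
  -- decompose the directional derivative
  have hdecomp : ∀ t : ℝ, fderiv ℝ f (γ t) v =
      ∑ s : Fin d, v s * fderiv ℝ f (γ t) (Pi.single s 1) := by
    intro t
    have h := LinearMap.pi_apply_eq_sum_univ ((fderiv ℝ f (γ t)).toLinearMap) v
    simp only [ContinuousLinearMap.coe_coe, smul_eq_mul] at h
    have hsingle : ∀ s : Fin d, (fun k => if s = k then (1:ℝ) else 0) = Pi.single s 1 := by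
      intro s; funext k; simp [Pi.single_apply, eq_comm]
    rw [h]
    refine Finset.sum_congr rfl fun s _ => ?_
    rw [hsingle s]
  set I : Fin d → ℝ := fun s => ∫ t in (0:ℝ)..1, fderiv ℝ f (γ t) (Pi.single s 1) with hI
  have hsum : f (x i) - f (x j) = ∑ s : Fin d, v s * I s := by
    rw [← hftc]
    calc (∫ t in (0:ℝ)..1, fderiv ℝ f (γ t) v)
        = ∫ t in (0:ℝ)..1, ∑ s : Fin d, v s * fderiv ℝ f (γ t) (Pi.single s 1) := by
          refine intervalIntegral.integral_congr fun t _ => hdecomp t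
      _ = ∑ s : Fin d, ∫ t in (0:ℝ)..1, v s * fderiv ℝ f (γ t) (Pi.single s 1) := by
          refine intervalIntegral.integral_finset_sum fun s _ => ?_
          exact (hφint (Pi.single s 1)).const_mul (v s)
      _ = ∑ s : Fin d, v s * I s := by
          refine Finset.sum_congr rfl fun s _ => ?_
          rw [hI, intervalIntegral.integral_const_mul]
  have hIbound : ∀ s : Fin d, |I s| ≤ M := by
    intro s
    have h := intervalIntegral.norm_integral_le_of_norm_le_const
      (C := M) (f := fun t => fderiv ℝ f (γ t) (Pi.single s 1)) (a := 0) (b := 1) ?_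
    · simpa using h
    · intro t ht
      rw [Set.uIoc_of_le (by norm_num)] at ht
      have htmem : t ∈ Set.Icc (0:ℝ) 1 := ⟨le_of_lt ht.1, ht.2⟩
      have hm := hM s (γ t) (hγmem t htmem)
      rwa [fderivWithin_of_isOpen hE (hγmem t htmem)] at hm
  -- complex algebra
  set z : ℂ := (x i q : ℂ) - (x j q : ℂ) with hz
  have hz0 : z ≠ 0 := by
    rw [hz]
    simp only [← Complex.ofReal_sub]
    exact_mod_cast sub_ne_zero.mpr hq
  have hkey : Γ q i j * ((f (x i) : ℂ) - (f (x j) : ℂ)) =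
      (∑ s : Fin d, (I s : ℂ) * Γ s i j) * z := by
    have : ((f (x i) : ℂ) - (f (x j) : ℂ)) = ∑ s : Fin d, (v s : ℂ) * (I s : ℂ) := by
      rw [← Complex.ofReal_sub, hsum]
      push_cast
      ring_nf
    rw [this, Finset.mul_sum, Finset.sum_mul]
    refine Finset.sum_congr rfl fun s _ => ?_
    have hc := hcompat i j s q
    have hvs : (v s : ℂ) = (x i s : ℂ) - (x j s : ℂ) := by
      rw [hv]; push_cast; simp
    rw [hvs, hz]
    calc Γ q i j * (((x i s : ℂ) - (x j s : ℂ)) * (I s : ℂ))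
        = (Γ q i j * ((x i s : ℂ) - (x j s : ℂ))) * (I s : ℂ) := by ring
      _ = (Γ s i j * ((x i q : ℂ) - (x j q : ℂ))) * (I s : ℂ) := by rw [hc]
      _ = (I s : ℂ) * Γ s i j * ((x i q : ℂ) - (x j q : ℂ)) := by ring
  have heq : Γ q i j * ((f (x i) : ℂ) - (f (x j) : ℂ)) / z =
      ∑ s : Fin d, (I s : ℂ) * Γ s i j := by
    rw [hkey, mul_div_assoc, div_self hz0, mul_one]
  rw [heq]
  calc ‖∑ s : Fin d, (I s : ℂ) * Γ s i j‖
      ≤ ∑ s : Fin d, ‖(I s : ℂ) * Γ s i j‖ := norm_sum_le _ _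
    _ ≤ ∑ s : Fin d, M * G := by
        refine Finset.sum_le_sum fun s _ => ?_
        rw [norm_mul, Complex.norm_real, Real.norm_eq_abs]
        exact mul_le_mul (hIbound s) (hG s i j) (norm_nonneg _) hM0
    _ = d * M * G := by rw [Finset.sum_const]; simp [mul_assoc]
    _ ≤ d * n ^ 2 * M * G := by
        have h1 : (1:ℝ) ≤ (n:ℝ) ^ 2 := by
          have : (1:ℝ) ≤ (n:ℝ) := by exact_mod_cast hn
          nlinarith
        have h2 : (d:ℝ)*M*G ≤ (n:ℝ)^2 * ((d:ℝ)*M*G) :=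
          le_mul_of_one_le_left (by positivity) h1
        calc (d:ℝ)*M*G ≤ (n:ℝ)^2 * ((d:ℝ)*M*G) := h2
          _ = (d:ℝ) * (n:ℝ)^2 * M * G := by ring
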